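/- arXiv:1002.5041 — 2 statements merged into one kernel-verified Lean document; each statement's English description precedes it below -/
import Mathlib

section
/- Let n(z) = (2π)^{-1/2} e^{-z²/2} be the standard normal density. For every finite signed measure ω on ℝ with total variation norm ‖ω‖_TV ≤ 1 and ∫ n(z) ω(dz) = 0, one has |∫ z n(z) ω(dz)| ≤ n(1) = e^{-1/2}/√(2π). -/
open MeasureTheory Set

/-- Integral of a function with respect to a finite signed measure, defined via
the Jordan decomposition. -/
noncomputable def signedIntegral (f : ℝ → ℝ) (ω : SignedMeasure ℝ) : ℝ :=
  (∫ x, f x ∂ω.toJordanDecomposition.posPart)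
    - (∫ x, f x ∂ω.toJordanDecomposition.negPart)

/-- The standard normal density. -/
noncomputable def stdNormalDensity (z : ℝ) : ℝ :=
  (Real.sqrt (2 * Real.pi))⁻¹ * Real.exp (-z ^ 2 / 2)

lemma zmul_bound (z : ℝ) :
    ‖z * stdNormalDensity z‖ ≤ Real.exp (-(1:ℝ)/2) / Real.sqrt (2 * Real.pi) := by
  have hπ : 0 < Real.sqrt (2 * Real.pi) := Real.sqrt_pos.mpr (by positivity)
  have h2 : |z| ≤ Real.exp ((z ^ 2 - 1) / 2) := by
    have := Real.add_one_le_exp ((z ^ 2 - 1) / 2)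
    nlinarith [sq_nonneg (|z| - 1), sq_abs z]
  have h1 : |z| * Real.exp (-z ^ 2 / 2) ≤ Real.exp (-(1:ℝ)/2) := by
    calc |z| * Real.exp (-z ^ 2 / 2)
        ≤ Real.exp ((z ^ 2 - 1) / 2) * Real.exp (-z ^ 2 / 2) :=
          mul_le_mul_of_nonneg_right h2 (Real.exp_pos _).le
      _ = Real.exp (-(1:ℝ)/2) := by rw [← Real.exp_add]; ring_nf
  have : ‖z * stdNormalDensity z‖ = |z| * Real.exp (-z ^ 2 / 2) * (Real.sqrt (2 * Real.pi))⁻¹ := by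
    rw [stdNormalDensity, Real.norm_eq_abs, abs_mul, abs_mul,
      abs_of_nonneg (inv_pos.mpr hπ).le, abs_of_nonneg (Real.exp_pos _).le]
    ring
  rw [this, div_eq_mul_inv]
  exact mul_le_mul_of_nonneg_right h1 (inv_pos.mpr hπ).le

/-- For every vega-neutral signed measure of total variation at
most one, `|∫ z n(z) ω(dz)| ≤ n(1) = e^{-1/2}/√(2π)`. -/
theorem skew_term_bound
    (ω : SignedMeasure ℝ)
    (hTV : ω.totalVariation univ ≤ 1)
    (hneutral : signedIntegral stdNormalDensity ω = 0) :
    |signedIntegral (fun z => z * stdNormalDensity z) ω| ≤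
      Real.exp (-(1:ℝ)/2) / Real.sqrt (2 * Real.pi) := by
  set M : ℝ := Real.exp (-(1:ℝ)/2) / Real.sqrt (2 * Real.pi) with hM
  have hM0 : 0 ≤ M := by
    have hπ : 0 < Real.sqrt (2 * Real.pi) := Real.sqrt_pos.mpr (by positivity)
    positivity
  set μp := ω.toJordanDecomposition.posPart
  set μn := ω.toJordanDecomposition.negPart
  have hp : ‖∫ x, x * stdNormalDensity x ∂μp‖ ≤ M * (μp univ).toReal :=
    norm_integral_le_of_norm_le_const (Filter.Eventually.of_forall fun z => zmul_bound z)
  have hn : ‖∫ x, x * stdNormalDensity x ∂μn‖ ≤ M * (μn univ).toReal :=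
    norm_integral_le_of_norm_le_const (Filter.Eventually.of_forall fun z => zmul_bound z)
  have htv : μp univ + μn univ ≤ 1 := by
    have : ω.totalVariation univ = μp univ + μn univ := by
      rw [SignedMeasure.totalVariation, Measure.add_apply]
    rwa [this] at hTV
  have hfin_p : μp univ ≠ ⊤ := measure_ne_top _ _
  have hfin_n : μn univ ≠ ⊤ := measure_ne_top _ _
  have hsum : (μp univ).toReal + (μn univ).toReal ≤ 1 := by
    rw [← ENNReal.toReal_add hfin_p hfin_n]
    have := ENNReal.toReal_mono (by norm_num : (1 : ENNReal) ≠ ⊤) htv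
    simpa using this
  have : |signedIntegral (fun z => z * stdNormalDensity z) ω|
      ≤ M * (μp univ).toReal + M * (μn univ).toReal := by
    rw [signedIntegral]
    calc |(∫ x, x * stdNormalDensity x ∂μp) - ∫ x, x * stdNormalDensity x ∂μn|
        ≤ |∫ x, x * stdNormalDensity x ∂μp| + |∫ x, x * stdNormalDensity x ∂μn| :=
          abs_sub _ _
      _ ≤ M * (μp univ).toReal + M * (μn univ).toReal := add_le_add hp hn
  calc |signedIntegral (fun z => z * stdNormalDensity z) ω|
      ≤ M * (μp univ).toReal + M * (μn univ).toReal := this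
    _ = M * ((μp univ).toReal + (μn univ).toReal) := by ring
    _ ≤ M * 1 := mul_le_mul_of_nonneg_left hsum hM0
    _ = M := mul_one M
end

section
/- Let n(z) = (2π)^{-1/2} e^{-z²/2} be the standard normal density and let z₀ be the unique positive solution of (z₀²/2)e^{z₀²/2} = e^{z₀²/2} + 1. For every finite signed measure ω on ℝ with total variation norm ‖ω‖_TV ≤ 1 and ∫ n(z) ω(dz) = 0, one has ∫ z² n(z) ω(dz) ≤ (2/√(2π)) e^{-z₀²/2}. -/
open MeasureTheory Set

lemma stdNormalDensity_continuous : Continuous stdNormalDensity := by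
  unfold stdNormalDensity
  fun_prop

lemma integrable_of_bdd_cont {μ : Measure ℝ} [IsFiniteMeasure μ] {g : ℝ → ℝ} {C : ℝ}
    (hg : Continuous g) (hb : ∀ x, |g x| ≤ C) : Integrable g μ :=
  (integrable_const C).mono' hg.aestronglyMeasurable (Filter.Eventually.of_forall fun x => by
    simpa [Real.norm_eq_abs] using hb x)

/-- For every vega-neutral signed measure of total variation at
most one, `∫ z² n(z) ω(dz) ≤ (2/√(2π)) e^{-z₀²/2}`, where `z₀` is the unique
positive solution of `(z₀²/2)e^{z₀²/2} = e^{z₀²/2} + 1`. -/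
theorem convexity_term_bound
    (z₀ : ℝ) (hz₀_pos : 0 < z₀)
    (hz₀_eq : (z₀ ^ 2 / 2) * Real.exp (z₀ ^ 2 / 2) = Real.exp (z₀ ^ 2 / 2) + 1)
    (ω : SignedMeasure ℝ)
    (hTV : ω.totalVariation univ ≤ 1)
    (hneutral : signedIntegral stdNormalDensity ω = 0) :
    signedIntegral (fun z => z ^ 2 * stdNormalDensity z) ω ≤
      2 / Real.sqrt (2 * Real.pi) * Real.exp (-z₀ ^ 2 / 2) := by
  set c : ℝ := z₀ ^ 2 - 2 with hc_def
  have hE : Real.exp (z₀ ^ 2 / 2) * Real.exp (-z₀ ^ 2 / 2) = 1 := by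
    rw [← Real.exp_add]; ring_nf; exact Real.exp_zero
  have hEpos := Real.exp_pos (z₀ ^ 2 / 2)
  have hEpos' := Real.exp_pos (-z₀ ^ 2 / 2)
  -- c = 2 e^{-z₀²/2}
  have hc : c = 2 * Real.exp (-z₀ ^ 2 / 2) := by
    have h := congrArg (· * Real.exp (-z₀ ^ 2 / 2)) hz₀_eq
    nlinarith [h, hE]
  have hcpos : 0 < c := by rw [hc]; positivity
  have hS : 0 < Real.sqrt (2 * Real.pi) := Real.sqrt_pos.2 (by positivity)
  set C : ℝ := c / Real.sqrt (2 * Real.pi) with hC_def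
  have hCpos : 0 < C := div_pos hcpos hS
  have hCeq : C = 2 / Real.sqrt (2 * Real.pi) * Real.exp (-z₀ ^ 2 / 2) := by
    rw [hC_def, hc]; ring
  -- key pointwise bound on (z² - c) e^{-z²/2}
  have hkey : ∀ z : ℝ, |(z ^ 2 - c) * Real.exp (-z ^ 2 / 2)| ≤ c := by
    intro z
    have hez : 0 < Real.exp (-z ^ 2 / 2) := Real.exp_pos _
    have hez1 : Real.exp (-z ^ 2 / 2) ≤ 1 := Real.exp_le_one_iff.2 (by nlinarith [sq_nonneg z])
    rw [abs_le]
    refine ⟨by nlinarith [sq_nonneg z], ?_⟩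
    -- upper: (z²-c)e^{-z²/2} ≤ c  ⇔  z² - c ≤ c e^{z²/2}
    have hexp := Real.add_one_le_exp (z ^ 2 / 2 - z₀ ^ 2 / 2)
    have hsplit : Real.exp (z ^ 2 / 2 - z₀ ^ 2 / 2)
        = Real.exp (z ^ 2 / 2) * Real.exp (-z₀ ^ 2 / 2) := by
      rw [← Real.exp_add]; ring_nf
    have hup : z ^ 2 - c ≤ c * Real.exp (z ^ 2 / 2) := by
      rw [hc]
      nlinarith [hexp, hsplit]
    have hEE : Real.exp (z ^ 2 / 2) * Real.exp (-z ^ 2 / 2) = 1 := by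
      rw [← Real.exp_add]; ring_nf; exact Real.exp_zero
    nlinarith [mul_le_mul_of_nonneg_right hup hez.le, hEE]
  set n : ℝ → ℝ := stdNormalDensity with hn_def
  set g : ℝ → ℝ := fun z => z ^ 2 * n z - c * n z with hg_def
  have hgval : ∀ z, g z = (z ^ 2 - c) * Real.exp (-z ^ 2 / 2) / Real.sqrt (2 * Real.pi) := by
    intro z
    simp only [hg_def, hn_def, stdNormalDensity]
    field_simp
  have hgbound : ∀ z, |g z| ≤ C := by
    intro z
    rw [hgval z, hC_def, abs_div, abs_of_pos hS]
    exact div_le_div_of_nonneg_right (hkey z) hS.le |>.trans_eq rfl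
  have hgcont : Continuous g := by
    apply Continuous.sub
    · exact (continuous_pow 2).mul stdNormalDensity_continuous
    · exact continuous_const.mul stdNormalDensity_continuous
  have hncont : Continuous n := stdNormalDensity_continuous
  have hnbound : ∀ z, |n z| ≤ (Real.sqrt (2 * Real.pi))⁻¹ := by
    intro z
    have h1 : 0 < n z := by simp only [hn_def, stdNormalDensity]; positivity
    rw [abs_of_pos h1]
    simp only [hn_def, stdNormalDensity]
    have h2 := Real.exp_le_one_iff.2 (show (-z ^ 2 / 2 : ℝ) ≤ 0 by nlinarith [sq_nonneg z])
    nlinarith [inv_pos.2 hS, Real.exp_pos (-z ^ 2 / 2)]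
  set P := ω.toJordanDecomposition.posPart with hP_def
  set N := ω.toJordanDecomposition.negPart with hN_def
  have hgP : Integrable g P := integrable_of_bdd_cont hgcont hgbound
  have hgN : Integrable g N := integrable_of_bdd_cont hgcont hgbound
  have hnP : Integrable n P := integrable_of_bdd_cont hncont hnbound
  have hnN : Integrable n N := integrable_of_bdd_cont hncont hnbound
  -- decompose f = g + c • n and use vega-neutrality
  have hfeq : (fun z => z ^ 2 * n z) = fun z => g z + c * n z := by
    funext z; simp only [hg_def]; ring
  have hsplit2 : signedIntegral (fun z => z ^ 2 * n z) ω = signedIntegral g ω := by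
    have hnne : signedIntegral n ω = 0 := hneutral
    simp only [signedIntegral] at hnne ⊢
    rw [hfeq, integral_add hgP (hnP.const_mul c), integral_add hgN (hnN.const_mul c),
      integral_const_mul, integral_const_mul]
    rw [← hP_def, ← hN_def] at hnne ⊢
    linear_combination c * hnne
  rw [hn_def] at hsplit2
  rw [hsplit2, ← hCeq]
  -- bound the two integrals
  have hP1 : ∫ x, g x ∂P ≤ (P univ).toReal * C := by
    calc ∫ x, g x ∂P ≤ ∫ _, C ∂P :=
          integral_mono hgP (integrable_const C) fun z => (abs_le.1 (hgbound z)).2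
      _ = (P univ).toReal * C := by rw [integral_const]; simp [smul_eq_mul, Measure.real]
  have hN1 : (N univ).toReal * (-C) ≤ ∫ x, g x ∂N := by
    calc (N univ).toReal * (-C) = ∫ _, (-C) ∂N := by rw [integral_const]; simp [smul_eq_mul, Measure.real]
      _ ≤ ∫ x, g x ∂N :=
          integral_mono (integrable_const (-C)) hgN fun z => (abs_le.1 (hgbound z)).1
  -- total variation mass bound
  have hmass : (P univ).toReal + (N univ).toReal ≤ 1 := by
    have h1 : P univ + N univ ≤ 1 := by
      have := hTV
      rw [SignedMeasure.totalVariation, Measure.add_apply] at this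
      exact this
    have h2 : ((P univ) + (N univ)).toReal ≤ (1 : ENNReal).toReal :=
      ENNReal.toReal_mono ENNReal.one_ne_top h1
    rwa [ENNReal.toReal_add (measure_ne_top _ _) (measure_ne_top _ _), ENNReal.toReal_one] at h2
  have hPnn : (0:ℝ) ≤ (P univ).toReal := ENNReal.toReal_nonneg
  have hNnn : (0:ℝ) ≤ (N univ).toReal := ENNReal.toReal_nonneg
  have hgeq : signedIntegral g ω = (∫ x, g x ∂P) - ∫ x, g x ∂N := rfl
  rw [hgeq]
  nlinarith [hP1, hN1, hmass, hCpos]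
end
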